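/- arXiv:1509.00126 — 2 statements merged into one kernel-verified Lean document; each statement's English description precedes it below -/
import Mathlib

section
/- Theorem 2(b): If (1−δ)·(f_α+f_β)/2 > c > (1−δ)·f_β, then the unique strongly efficient network is the graph whose edges are exactly the pairs {i,j} with at least one endpoint in A: every two type-α agents are linked, every type-α agent is linked with every type-β agent, and no two type-β agents are linked. -/
open Finset

noncomputable section

open scoped Classical

variable {I : Type*}

/-- Benefit function of the two-type connections model: a connection to a
type-α agent (a member of `A`) yields `fα`, a connection to a type-β agent
yields `fβ` (before spatial discounting). -/
def fTheta [DecidableEq I] (A : Finset I) (fα fβ : ℝ) (j : I) : ℝ :=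
  if j ∈ A then fα else fβ

/-- One-period payoff of agent `i` in network `g`:
`u_i(g) = Σ_{j ≠ i reachable from i} δ^(d_g(i,j)-1) f(θ_j) − deg_g(i)·c`. -/
def payoff [Fintype I] (f : I → ℝ) (c δ : ℝ) (g : SimpleGraph I) (i : I) : ℝ :=
  (∑ j ∈ univ.filter fun j => j ≠ i ∧ g.Reachable i j, δ ^ (g.dist i j - 1) * f j)
    - ((univ.filter fun j => g.Adj i j).card : ℝ) * c

/-- Total one-period payoff `ν(g) = Σ_i u_i(g)`. -/
def totalPayoff [Fintype I] (f : I → ℝ) (c δ : ℝ) (g : SimpleGraph I) : ℝ :=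
  ∑ i, payoff f c δ g i

/-- A network is strongly efficient if it maximizes the total payoff. -/
def StronglyEfficient [Fintype I] (f : I → ℝ) (c δ : ℝ) (g : SimpleGraph I) : Prop :=
  ∀ g' : SimpleGraph I, totalPayoff f c δ g' ≤ totalPayoff f c δ g

/-- A network `g` is core-stable if no subgroup `I'` of agents, together with a
network `g'` all of whose links are inside `I'`, gives every member of `I'` a
weakly higher payoff and some member a strictly higher payoff. -/
def CoreStable [Fintype I] (f : I → ℝ) (c δ : ℝ) (g : SimpleGraph I) : Prop :=
  ¬ ∃ (I' : Finset I) (g' : SimpleGraph I),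
      (∀ i j : I, g'.Adj i j → i ∈ I' ∧ j ∈ I') ∧
      (∀ i ∈ I', payoff f c δ g i ≤ payoff f c δ g' i) ∧
      (∃ i ∈ I', payoff f c δ g i < payoff f c δ g' i)

/-- The network whose links are exactly the pairs with at least one endpoint in `A`. -/
def withCore (A : Finset I) : SimpleGraph I where
  Adj i j := i ≠ j ∧ (i ∈ A ∨ j ∈ A)
  symm := ⟨fun i j h => ⟨h.1.symm, h.2.symm⟩⟩
  loopless := ⟨fun i h => h.1 rfl⟩

/-- The clique on `A`: exactly all pairs of distinct members of `A` are linked. -/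
def cliqueOn (A : Finset I) : SimpleGraph I where
  Adj i j := i ≠ j ∧ i ∈ A ∧ j ∈ A
  symm := ⟨fun i j h => ⟨h.1.symm, h.2.2, h.2.1⟩⟩
  loopless := ⟨fun i h => h.1 rfl⟩

/-- Clique on `A` together with the links `{i₀, j}` for every agent `j ∉ A`. -/
def coreStar (A : Finset I) (i₀ : I) : SimpleGraph I where
  Adj i j := i ≠ j ∧ ((i ∈ A ∧ j ∈ A) ∨ (i = i₀ ∧ j ∉ A) ∨ (j = i₀ ∧ i ∉ A))
  symm := by
    constructor
    rintro i j ⟨hne, h⟩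
    refine ⟨hne.symm, ?_⟩
    rcases h with h | h | h
    · exact Or.inl ⟨h.2, h.1⟩
    · exact Or.inr (Or.inr h)
    · exact Or.inr (Or.inl h)
  loopless := ⟨fun i h => h.1 rfl⟩

/-- The star on all agents centered at `i₀`. -/
def starAll (i₀ : I) : SimpleGraph I where
  Adj i j := i ≠ j ∧ (i = i₀ ∨ j = i₀)
  symm := ⟨fun i j h => ⟨h.1.symm, h.2.symm⟩⟩
  loopless := ⟨fun i h => h.1 rfl⟩

/-- The star on the agents in `A`, centered at `i₀`. -/
def starOn (A : Finset I) (i₀ : I) : SimpleGraph I where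
  Adj i j := i ≠ j ∧ (i = i₀ ∨ j = i₀) ∧ i ∈ A ∧ j ∈ A
  symm := ⟨fun i j h => ⟨h.1.symm, h.2.1.symm, h.2.2.2, h.2.2.1⟩⟩
  loopless := ⟨fun i h => h.1 rfl⟩

section AuxThm2b

variable [Fintype I] [DecidableEq I]

/-- Contribution of the ordered pair `(i,j)` to `i`'s payoff. -/
noncomputable def contrib (f : I → ℝ) (c δ : ℝ) (g : SimpleGraph I) (i j : I) : ℝ :=
  if g.Adj i j then f j - c
  else if j ≠ i ∧ g.Reachable i j then δ ^ (g.dist i j - 1) * f j else 0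

lemma payoff_eq_sum (f : I → ℝ) (c δ : ℝ) (g : SimpleGraph I) (i : I) :
    payoff f c δ g i = ∑ j, contrib f c δ g i j := by
  unfold payoff contrib
  have hcard : ((univ.filter fun j => g.Adj i j).card : ℝ) * c
      = ∑ j, (if g.Adj i j then c else 0) := by
    rw [← Finset.sum_filter, Finset.sum_const, nsmul_eq_mul]
  rw [hcard, Finset.sum_filter, ← Finset.sum_sub_distrib]
  refine Finset.sum_congr rfl fun j _ => ?_
  by_cases h : g.Adj i j
  · have hd : g.dist i j = 1 := SimpleGraph.dist_eq_one_iff_adj.mpr h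
    have hcond : j ≠ i ∧ g.Reachable i j := ⟨h.ne', h.reachable⟩
    simp [h, hcond, hd]
  · simp [h]

lemma two_le_dist {g : SimpleGraph I} {i j : I} (hij : i ≠ j)
    (hna : ¬ g.Adj i j) (hr : g.Reachable i j) : 2 ≤ g.dist i j := by
  have h0 : g.dist i j ≠ 0 := by
    rw [ne_eq, SimpleGraph.dist_eq_zero_iff_eq_or_not_reachable]
    push_neg; exact ⟨hij, hr⟩
  have h1 : g.dist i j ≠ 1 := fun h => hna (SimpleGraph.dist_eq_one_iff_adj.mp h)
  omega

lemma contrib_core (A : Finset I) (hA : A.Nonempty)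
    (f : I → ℝ) (c δ : ℝ) {i j : I} (hij : i ≠ j) :
    contrib f c δ (withCore A) i j = if i ∈ A ∨ j ∈ A then f j - c else δ * f j := by
  by_cases h : i ∈ A ∨ j ∈ A
  · have hadj : (withCore A).Adj i j := ⟨hij, h⟩
    simp [contrib, hadj, h]
  · push_neg at h
    have hnadj : ¬ (withCore A).Adj i j := by
      rintro ⟨-, hc⟩; rcases hc with hc | hc
      · exact h.1 hc
      · exact h.2 hc
    obtain ⟨a, ha⟩ := hA
    have h1 : (withCore A).Adj i a := ⟨fun he => h.1 (he ▸ ha), Or.inr ha⟩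
    have h2 : (withCore A).Adj a j := ⟨fun he => h.2 (he ▸ ha), Or.inl ha⟩
    have hreach : (withCore A).Reachable i j :=
      ⟨SimpleGraph.Walk.cons h1 (SimpleGraph.Walk.cons h2 SimpleGraph.Walk.nil)⟩
    have hdist : (withCore A).dist i j = 2 := by
      have hle : (withCore A).dist i j ≤ 2 := by
        have := SimpleGraph.dist_le
          (SimpleGraph.Walk.cons h1 (SimpleGraph.Walk.cons h2 SimpleGraph.Walk.nil))
        simpa using this
      have h0 : (withCore A).dist i j ≠ 0 := by
        rw [ne_eq, SimpleGraph.dist_eq_zero_iff_eq_or_not_reachable]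
        push_neg; exact ⟨hij, hreach⟩
      have h1' : (withCore A).dist i j ≠ 1 := fun he =>
        hnadj (SimpleGraph.dist_eq_one_iff_adj.mp he)
      omega
    simp [contrib, hnadj, hij.symm, hreach, hdist, not_or.mpr h]

lemma pair_value (f : I → ℝ) (c δ : ℝ) (g : SimpleGraph I) {i j : I}
    (hij : i ≠ j) :
    contrib f c δ g i j + contrib f c δ g j i =
      if g.Adj i j then (f i + f j) - 2 * c
      else if g.Reachable i j then δ ^ (g.dist i j - 1) * (f i + f j) else 0 := by
  unfold contrib
  have hsym : g.Adj j i ↔ g.Adj i j := g.adj_comm j i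
  have hrsym : g.Reachable j i ↔ g.Reachable i j := ⟨fun h => h.symm, fun h => h.symm⟩
  have hdsym : g.dist j i = g.dist i j := SimpleGraph.dist_comm
  by_cases h : g.Adj i j
  · simp [h, hsym.mpr h]; ring
  · simp only [h, if_false, hsym, if_neg h]
    by_cases hr : g.Reachable i j
    · simp [hij, hij.symm, hr, hrsym.mpr hr, hdsym]; ring
    · simp [hr, hrsym, hij, hij.symm]

lemma pair_main (A : Finset I) (hA : A.Nonempty)
    (fα fβ c δ : ℝ) (hfαβ : fβ < fα) (hfβ : 0 < fβ) (hδ0 : 0 < δ) (hδ1 : δ < 1)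
    (h1 : (1 - δ) * ((fα + fβ) / 2) > c) (h2 : c > (1 - δ) * fβ)
    (g : SimpleGraph I) {i j : I} (hij : i ≠ j) :
    (contrib (fTheta A fα fβ) c δ g i j + contrib (fTheta A fα fβ) c δ g j i ≤
      contrib (fTheta A fα fβ) c δ (withCore A) i j +
        contrib (fTheta A fα fβ) c δ (withCore A) j i) ∧
    (¬ (g.Adj i j ↔ (i ∈ A ∨ j ∈ A)) →
      contrib (fTheta A fα fβ) c δ g i j + contrib (fTheta A fα fβ) c δ g j i <
      contrib (fTheta A fα fβ) c δ (withCore A) i j +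
        contrib (fTheta A fα fβ) c δ (withCore A) j i) := by
  set f := fTheta A fα fβ with hf
  have hfb : ∀ k, fβ ≤ f k := fun k => by
    simp only [hf, fTheta]; split <;> linarith
  have hmemf : ∀ k, k ∈ A → f k = fα := fun k hk => by simp [hf, fTheta, hk]
  have hnmemf : ∀ k, k ∉ A → f k = fβ := fun k hk => by simp [hf, fTheta, hk]
  set s := f i + f j with hs
  have hs0 : 0 < s := by have := hfb i; have := hfb j; linarith
  have hcore : contrib f c δ (withCore A) i j + contrib f c δ (withCore A) j i =
      if i ∈ A ∨ j ∈ A then s - 2 * c else δ * s := by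
    rw [contrib_core A hA f c δ hij, contrib_core A hA f c δ hij.symm]
    by_cases h : i ∈ A ∨ j ∈ A
    · rw [if_pos h, if_pos (Or.symm h), if_pos h]; ring
    · rw [if_neg h, if_neg (fun hh => h (Or.symm hh)), if_neg h]; ring
  rw [pair_value f c δ g hij, hcore]
  have hpow : ∀ d : ℕ, 2 ≤ d → δ ^ (d - 1) * s ≤ δ * s := by
    intro d hd
    have : δ ^ (d - 1) ≤ δ ^ 1 := pow_le_pow_of_le_one hδ0.le hδ1.le (by omega)
    have := mul_le_mul_of_nonneg_right this hs0.le
    simpa using this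
  by_cases h : i ∈ A ∨ j ∈ A
  · have hsge : fα + fβ ≤ s := by
      rcases h with h | h
      · have := hmemf i h; have := hfb j; simp only [hs]; linarith
      · have := hmemf j h; have := hfb i; simp only [hs]; linarith
    have htarget : δ * s < s - 2 * c := by nlinarith [h1, hδ1]
    rw [if_pos h]
    by_cases hadj : g.Adj i j
    · rw [if_pos hadj]
      exact ⟨le_refl _, fun hmis => absurd (iff_of_true hadj h) hmis⟩
    · rw [if_neg hadj, ← hs]
      have key0 : (0:ℝ) < s - 2 * c := by
        have := mul_pos hδ0 hs0; linarith
      have key : g.Reachable i j → δ ^ (g.dist i j - 1) * s < s - 2 * c := fun hr => by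
        have := hpow _ (two_le_dist hij hadj hr); linarith
      constructor
      · split_ifs with hr
        · exact (key hr).le
        · exact key0.le
      · intro _
        split_ifs with hr
        · exact key hr
        · exact key0
  · push_neg at h
    have hsi : f i = fβ := hnmemf i h.1
    have hsj : f j = fβ := hnmemf j h.2
    have hseq : s = 2 * fβ := by simp only [hs]; linarith
    rw [if_neg (not_or.mpr h)]
    by_cases hadj : g.Adj i j
    · rw [if_pos hadj]
      have hlt : s - 2 * c < δ * s := by nlinarith [h2]
      exact ⟨hlt.le, fun _ => hlt⟩
    · rw [if_neg hadj, ← hs]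
      refine ⟨?_, fun hmis => absurd (iff_of_false hadj (not_or.mpr h)) hmis⟩
      split_ifs with hr
      · exact hpow _ (two_le_dist hij hadj hr)
      · positivity

end AuxThm2b

/-- Theorem 2(b): if `(1−δ)·(fα+fβ)/2 > c > (1−δ)·fβ`, the unique strongly
efficient network links exactly the pairs with at least one type-α endpoint. -/
theorem thm2b {I : Type*} [Fintype I] [DecidableEq I]
    (A : Finset I) (fα fβ c δ : ℝ)
    (hA : 1 ≤ A.card) (hB : 1 ≤ Aᶜ.card)
    (hfαβ : fβ < fα) (hfβ : 0 < fβ) (hc : 0 < c)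
    (hδ0 : 0 < δ) (hδ1 : δ < 1)
    (h1 : (1 - δ) * ((fα + fβ) / 2) > c) (h2 : c > (1 - δ) * fβ) :
    StronglyEfficient (fTheta A fα fβ) c δ (withCore A) ∧
      ∀ g : SimpleGraph I, StronglyEfficient (fTheta A fα fβ) c δ g → g = withCore A := by
  have hAne : A.Nonempty := Finset.card_pos.mp hA
  set f := fTheta A fα fβ with hfdef
  have hpair : ∀ (g : SimpleGraph I) (i j : I),
      contrib f c δ g i j + contrib f c δ g j i ≤
      contrib f c δ (withCore A) i j + contrib f c δ (withCore A) j i := by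
    intro g i j
    by_cases hij : i = j
    · subst hij
      simp [contrib, SimpleGraph.irrefl]
    · exact (pair_main A hAne fα fβ c δ hfαβ hfβ hδ0 hδ1 h1 h2 g hij).1
  have hdouble : ∀ g : SimpleGraph I,
      ∑ i, ∑ j, (contrib f c δ g i j + contrib f c δ g j i)
        = 2 * totalPayoff f c δ g := by
    intro g
    have h1' : totalPayoff f c δ g = ∑ i, ∑ j, contrib f c δ g i j :=
      Finset.sum_congr rfl fun i _ => payoff_eq_sum f c δ g i
    have h2' : ∑ i, ∑ j, contrib f c δ g j i = ∑ j, ∑ i, contrib f c δ g j i :=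
      Finset.sum_comm
    simp_rw [Finset.sum_add_distrib]
    rw [h2', ← h1']
    ring
  have hle : ∀ g : SimpleGraph I, totalPayoff f c δ g ≤ totalPayoff f c δ (withCore A) := by
    intro g
    have hs : ∑ i, ∑ j, (contrib f c δ g i j + contrib f c δ g j i) ≤
        ∑ i, ∑ j, (contrib f c δ (withCore A) i j + contrib f c δ (withCore A) j i) :=
      Finset.sum_le_sum (fun i _ => Finset.sum_le_sum (fun j _ => hpair g i j))
    rw [hdouble g, hdouble (withCore A)] at hs
    linarith
  refine ⟨hle, ?_⟩
  intro g hg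
  by_contra hne
  have heq : totalPayoff f c δ g = totalPayoff f c δ (withCore A) :=
    le_antisymm (hle g) (hg (withCore A))
  have hex : ∃ i j : I, i ≠ j ∧ ¬ (g.Adj i j ↔ (i ∈ A ∨ j ∈ A)) := by
    by_contra hall
    simp only [not_exists, not_and, not_not] at hall
    apply hne
    ext i j
    constructor
    · intro h
      exact ⟨h.ne, (hall i j h.ne).mp h⟩
    · intro h
      obtain ⟨hne', hor⟩ := h
      exact (hall i j hne').mpr hor
  obtain ⟨i0, j0, hij0, hmis⟩ := hex
  have hstrict : ∑ i, ∑ j, (contrib f c δ g i j + contrib f c δ g j i) <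
      ∑ i, ∑ j, (contrib f c δ (withCore A) i j + contrib f c δ (withCore A) j i) := by
    apply Finset.sum_lt_sum
    · exact fun i _ => Finset.sum_le_sum fun j _ => hpair g i j
    · exact ⟨i0, Finset.mem_univ _, Finset.sum_lt_sum (fun j _ => hpair g i0 j)
        ⟨j0, Finset.mem_univ _,
          (pair_main A hAne fα fβ c δ hfαβ hfβ hδ0 hδ1 h1 h2 g hij0).2 hmis⟩⟩
  rw [hdouble g, hdouble (withCore A)] at hstrict
  linarith
end
end

section
/- Proposition 4(d): Suppose n_α ≥ 2 and f_α + δ·((n_α−1)·f_α + (n_β−1)·f_β) > c > max{ f_α + δ·((n_α−2)·f_α + n_β·f_β), (1−δ)·f_α }. Then the maximum over all networks g on I of u_i(g) equals 0 when i is a type-α agent, and equals f_α + δ·((n_α−1)·f_α + (n_β−1)·f_β) − c when i is a type-β agent; in both cases the maximum is attained. -/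
open Finset

noncomputable section

open scoped Classical

variable {I : Type*}

section Aux
variable [Fintype I] [DecidableEq I]

lemma payoff_eq' {I : Type*} [Fintype I] (f : I → ℝ) (c δ : ℝ) (g : SimpleGraph I) (i : I)
    (R N : Finset I) (hR : ∀ j, j ∈ R ↔ (j ≠ i ∧ g.Reachable i j))
    (hN : ∀ j, j ∈ N ↔ g.Adj i j) :
    payoff f c δ g i = (∑ j ∈ R, δ ^ (g.dist i j - 1) * f j) - (N.card : ℝ) * c := by
  have h1 : (univ.filter fun j => j ≠ i ∧ g.Reachable i j) = R := by
    ext j; simp only [Finset.mem_filter, Finset.mem_univ, true_and, hR j]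
  have h2 : (univ.filter fun j => g.Adj i j) = N := by
    ext j; simp only [Finset.mem_filter, Finset.mem_univ, true_and, hN j]
  rw [payoff, h1, h2]

lemma fTheta_pos (A : Finset I) {fα fβ : ℝ} (hfβ : 0 < fβ) (hfαβ : fβ < fα) (j : I) :
    0 < fTheta A fα fβ j := by unfold fTheta; split <;> linarith

lemma fTheta_le (A : Finset I) {fα fβ : ℝ} (hfαβ : fβ < fα) (j : I) :
    fTheta A fα fβ j ≤ fα := by unfold fTheta; split <;> linarith

lemma sum_fTheta (A : Finset I) (fα fβ : ℝ) (s : Finset I) :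
    ∑ j ∈ s, fTheta A fα fβ j = ((s ∩ A).card : ℝ) * fα + ((s \ A).card : ℝ) * fβ := by
  rw [← Finset.sum_filter_add_sum_filter_not s (· ∈ A), Finset.filter_mem_eq_inter]
  congr 1
  · rw [Finset.sum_congr rfl (fun j hj => ?_), Finset.sum_const, nsmul_eq_mul]
    exact if_pos (Finset.mem_inter.mp hj).2
  · rw [show Finset.filter (fun x => x ∉ A) s = s \ A from (Finset.sdiff_eq_filter s A).symm,
      Finset.sum_congr rfl (fun j hj => ?_), Finset.sum_const, nsmul_eq_mul]
    exact if_neg (Finset.mem_sdiff.mp hj).2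
end Aux

section Aux2
variable [Fintype I] [DecidableEq I]

lemma payoff_le_aux (A : Finset I) {fα fβ c δ : ℝ}
    (hfβ : 0 < fβ) (hfαβ : fβ < fα) (hδ0 : 0 < δ) (hδ1 : δ < 1)
    (hc : (1 - δ) * fα < c) (g : SimpleGraph I) (i : I) :
    payoff (fTheta A fα fβ) c δ g i ≤
      max 0 (δ * (∑ j ∈ univ.erase i, fTheta A fα fβ j) + (1 - δ) * fα - c) := by
  set f := fTheta A fα fβ with hf
  have hfpos : ∀ j, 0 < f j := fTheta_pos A hfβ hfαβ
  have hfle : ∀ j, f j ≤ fα := fTheta_le A hfαβ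
  classical
  set R : Finset I := univ.filter (fun j => j ≠ i ∧ g.Reachable i j) with hRdef
  set N : Finset I := univ.filter (fun j => g.Adj i j) with hNdef
  have hRmem : ∀ j, j ∈ R ↔ (j ≠ i ∧ g.Reachable i j) := by
    intro j; simp [hRdef]
  have hNmem : ∀ j, j ∈ N ↔ g.Adj i j := by
    intro j; simp [hNdef]
  rw [payoff_eq' f c δ g i R N hRmem hNmem]
  by_cases hk : N = ∅
  · have hadj : ∀ j, ¬ g.Adj i j := fun j hj => by
      exact Finset.notMem_empty j (hk ▸ (hNmem j).mpr hj)
    have hR : R = ∅ := by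
      apply Finset.eq_empty_of_forall_notMem
      intro j hj
      obtain ⟨hne, hr⟩ := (hRmem j).mp hj
      obtain ⟨w⟩ := hr
      cases w with
      | nil => exact hne rfl
      | cons h _ => exact hadj _ h
    rw [hR, hk]
    simp
  · have hk1 : 1 ≤ N.card := Finset.card_pos.mpr (Finset.nonempty_of_ne_empty hk)
    have hNsub : N ⊆ univ.erase i := fun j hj =>
      Finset.mem_erase.mpr ⟨((hNmem j).mp hj).ne', Finset.mem_univ j⟩
    have step1 : (∑ j ∈ R, δ ^ (g.dist i j - 1) * f j) ≤
        ∑ j ∈ univ.erase i, (if j ∈ N then f j else δ * f j) := by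
      have hsub : R ⊆ univ.erase i := fun j hj =>
        Finset.mem_erase.mpr ⟨((hRmem j).mp hj).1, Finset.mem_univ j⟩
      have h1 : (∑ j ∈ R, δ ^ (g.dist i j - 1) * f j) ≤
          ∑ j ∈ R, (if j ∈ N then f j else δ * f j) := by
        apply Finset.sum_le_sum
        intro j hj
        obtain ⟨hne, hr⟩ := (hRmem j).mp hj
        by_cases hadj : j ∈ N
        · rw [if_pos hadj]
          calc δ ^ (g.dist i j - 1) * f j ≤ 1 * f j :=
              mul_le_mul_of_nonneg_right (pow_le_one₀ hδ0.le hδ1.le) (hfpos j).le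
            _ = f j := one_mul _
        · rw [if_neg hadj]
          have hadj' : ¬ g.Adj i j := fun h => hadj ((hNmem j).mpr h)
          have hd0 : 0 < g.dist i j := hr.pos_dist_of_ne (Ne.symm hne)
          have hd1 : g.dist i j ≠ 1 := fun h => hadj' (SimpleGraph.dist_eq_one_iff_adj.mp h)
          have hd : 1 ≤ g.dist i j - 1 := by omega
          apply mul_le_mul_of_nonneg_right _ (hfpos j).le
          calc δ ^ (g.dist i j - 1) ≤ δ ^ 1 := pow_le_pow_of_le_one hδ0.le hδ1.le hd
            _ = δ := pow_one δ
      refine h1.trans (Finset.sum_le_sum_of_subset_of_nonneg hsub ?_)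
      intro j _ _
      split
      · exact (hfpos _).le
      · exact mul_nonneg hδ0.le (hfpos _).le
    have step2 : (∑ j ∈ univ.erase i, (if j ∈ N then f j else δ * f j)) =
        δ * (∑ j ∈ univ.erase i, f j) + (1 - δ) * ∑ j ∈ N, f j := by
      have : ∀ j ∈ univ.erase i, (if j ∈ N then f j else δ * f j) =
          δ * f j + (if j ∈ N then (1 - δ) * f j else 0) := by
        intro j _; split <;> ring
      rw [Finset.sum_congr rfl this, Finset.sum_add_distrib, ← Finset.mul_sum,
        ← Finset.sum_filter, Finset.filter_mem_eq_inter,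
        Finset.inter_eq_right.mpr hNsub, ← Finset.mul_sum]
    have step3 : (∑ j ∈ N, f j) ≤ (N.card : ℝ) * fα := by
      calc (∑ j ∈ N, f j) ≤ ∑ _j ∈ N, fα := Finset.sum_le_sum fun j _ => hfle j
        _ = (N.card : ℝ) * fα := by rw [Finset.sum_const, nsmul_eq_mul]
    have hkR : (1 : ℝ) ≤ (N.card : ℝ) := by exact_mod_cast hk1
    have : (∑ j ∈ R, δ ^ (g.dist i j - 1) * f j) - (N.card : ℝ) * c ≤
        δ * (∑ j ∈ univ.erase i, f j) + (1 - δ) * fα - c := by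
      have h2 : (1 - δ) * (∑ j ∈ N, f j) ≤ (1 - δ) * ((N.card : ℝ) * fα) :=
        mul_le_mul_of_nonneg_left step3 (by linarith)
      nlinarith [step1, step2]
    exact this.trans (le_max_right _ _)

end Aux2

/-- Proposition 4(d): the attained maximum one-period payoff of an agent over
all networks: `0` for type-α agents, positive for type-β agents. -/
theorem prop4d {I : Type*} [Fintype I] [DecidableEq I]
    (A : Finset I) (fα fβ c δ : ℝ)
    (hA : 1 ≤ A.card) (hB : 1 ≤ Aᶜ.card)
    (hfαβ : fβ < fα) (hfβ : 0 < fβ) (hc : 0 < c)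
    (hδ0 : 0 < δ) (hδ1 : δ < 1)
    (hA2 : 2 ≤ A.card)
    (h1 : fα + δ * (((A.card : ℝ) - 1) * fα + ((Aᶜ.card : ℝ) - 1) * fβ) > c)
    (h2 : c > max (fα + δ * (((A.card : ℝ) - 2) * fα + (Aᶜ.card : ℝ) * fβ)) ((1 - δ) * fα)) :
    (∀ i ∈ A, IsGreatest (Set.range fun g : SimpleGraph I => payoff (fTheta A fα fβ) c δ g i)
      0) ∧
    (∀ i ∉ A, IsGreatest (Set.range fun g : SimpleGraph I => payoff (fTheta A fα fβ) c δ g i)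
      (fα + δ * (((A.card : ℝ) - 1) * fα + ((Aᶜ.card : ℝ) - 1) * fβ) - c)) := by
    classical
  have hcα : fα + δ * (((A.card : ℝ) - 2) * fα + (Aᶜ.card : ℝ) * fβ) < c :=
    (le_max_left _ _).trans_lt h2
  have hcδ : (1 - δ) * fα < c := (le_max_right _ _).trans_lt h2
  have castA : ((A.card - 1 : ℕ) : ℝ) = (A.card : ℝ) - 1 := by
    push_cast [Nat.cast_sub hA]; ring
  have castB : ((Aᶜ.card - 1 : ℕ) : ℝ) = (Aᶜ.card : ℝ) - 1 := by
    push_cast [Nat.cast_sub hB]; ring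
  constructor
  · -- type-α agents
    intro i hi
    constructor
    · -- attained by the empty graph
      refine ⟨⊥, ?_⟩
      have hpay := payoff_eq' (fTheta A fα fβ) c δ (⊥ : SimpleGraph I) i ∅ ∅
        (fun j => by
          simp only [Finset.notMem_empty, false_iff, SimpleGraph.reachable_bot]
          rintro ⟨hne, rfl⟩; exact hne rfl)
        (fun j => by simp)
      show payoff (fTheta A fα fβ) c δ (⊥ : SimpleGraph I) i = 0
      simp only [hpay, Finset.sum_empty, Finset.card_empty, Nat.cast_zero, zero_mul, sub_zero]
    · rintro x ⟨g, rfl⟩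
      have hub := payoff_le_aux A hfβ hfαβ hδ0 hδ1 hcδ g i
      have e1 : univ.erase i ∩ A = A.erase i := by
        ext j
        simp only [Finset.mem_inter, Finset.mem_erase, Finset.mem_univ, and_true, true_and]
      have e2 : univ.erase i \ A = Aᶜ := by
        ext j
        simp only [Finset.mem_sdiff, Finset.mem_erase, Finset.mem_univ, and_true, true_and,
          Finset.mem_compl]
        exact ⟨fun h => h.2, fun h => ⟨fun hji => h (hji ▸ hi), h⟩⟩
      rw [sum_fTheta, e1, e2, Finset.card_erase_of_mem hi, castA] at hub
      have hle : δ * (((A.card : ℝ) - 1) * fα + (Aᶜ.card : ℝ) * fβ) + (1 - δ) * fα - c ≤ 0 := by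
        nlinarith [hcα]
      calc payoff (fTheta A fα fβ) c δ g i ≤ _ := hub
        _ ≤ 0 := max_le le_rfl hle
  · -- type-β agents
    intro i hi
    have hiC : i ∈ Aᶜ := Finset.mem_compl.mpr hi
    obtain ⟨i₀, hi₀⟩ := Finset.card_pos.mp (by omega : 0 < A.card)
    have hne : i ≠ i₀ := fun h => hi (h ▸ hi₀)
    set T := fα + δ * (((A.card : ℝ) - 1) * fα + ((Aᶜ.card : ℝ) - 1) * fβ) - c with hT
    constructor
    · -- attained by the star centered at i₀
      refine ⟨starAll i₀, ?_⟩
      have hadj0 : (starAll i₀).Adj i i₀ := ⟨hne, Or.inr rfl⟩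
      have hadjc : ∀ j, j ≠ i₀ → (starAll i₀).Adj i₀ j := fun j h => ⟨Ne.symm h, Or.inl rfl⟩
      have hreach : ∀ j, (starAll i₀).Reachable i j := by
        intro j
        by_cases hj : j = i₀
        · subst hj; exact hadj0.reachable
        · exact hadj0.reachable.trans (hadjc j hj).reachable
      have hpay := payoff_eq' (fTheta A fα fβ) c δ (starAll i₀) i (univ.erase i) {i₀}
        (fun j => by
          simp only [Finset.mem_erase, Finset.mem_univ, and_true]
          exact ⟨fun h => ⟨h, hreach j⟩, fun h => h.1⟩)
        (fun j => by
          simp only [Finset.mem_singleton]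
          constructor
          · rintro rfl; exact hadj0
          · rintro ⟨hij, h | h⟩
            · exact absurd h hne
            · exact h)
      have hd1 : (starAll i₀).dist i i₀ = 1 := SimpleGraph.dist_eq_one_iff_adj.mpr hadj0
      have hd2 : ∀ j, j ≠ i → j ≠ i₀ → (starAll i₀).dist i j = 2 := by
        intro j hji hj0
        have hle : (starAll i₀).dist i j ≤ 2 := by
          have := SimpleGraph.dist_le
            (SimpleGraph.Walk.cons hadj0 (SimpleGraph.Walk.cons (hadjc j hj0) SimpleGraph.Walk.nil))
          simpa using this
        have hpos : 0 < (starAll i₀).dist i j := (hreach j).pos_dist_of_ne (Ne.symm hji)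
        have hne1 : (starAll i₀).dist i j ≠ 1 := by
          intro h
          rcases (SimpleGraph.dist_eq_one_iff_adj.mp h).2 with h' | h'
          · exact hne h'
          · exact hj0 h'
        omega
      have hmem : i₀ ∈ univ.erase i := Finset.mem_erase.mpr ⟨Ne.symm hne, Finset.mem_univ i₀⟩
      show payoff (fTheta A fα fβ) c δ (starAll i₀) i = T
      rw [hpay, ← Finset.add_sum_erase _ _ hmem]
      have hterm : δ ^ ((starAll i₀).dist i i₀ - 1) * fTheta A fα fβ i₀ = fα := by
        rw [hd1]; simp [fTheta, hi₀]
      have hrest : ∑ j ∈ (univ.erase i).erase i₀, δ ^ ((starAll i₀).dist i j - 1) * fTheta A fα fβ j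
          = δ * ∑ j ∈ (univ.erase i).erase i₀, fTheta A fα fβ j := by
        rw [Finset.mul_sum]
        apply Finset.sum_congr rfl
        intro j hj
        obtain ⟨hj0, hji, -⟩ : j ≠ i₀ ∧ j ≠ i ∧ True := by
          have h := Finset.mem_erase.mp hj
          have h' := Finset.mem_erase.mp h.2
          exact ⟨h.1, h'.1, trivial⟩
        rw [hd2 j hji hj0]
        norm_num
      have e1 : (univ.erase i).erase i₀ ∩ A = A.erase i₀ := by
        ext j
        simp only [Finset.mem_inter, Finset.mem_erase, Finset.mem_univ, and_true, true_and]
        exact ⟨fun h => ⟨h.1.1, h.2⟩, fun h => ⟨⟨h.1, fun hji => hi (hji ▸ h.2)⟩, h.2⟩⟩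
      have e2 : (univ.erase i).erase i₀ \ A = Aᶜ.erase i := by
        ext j
        simp only [Finset.mem_sdiff, Finset.mem_erase, Finset.mem_univ, and_true, true_and,
          Finset.mem_compl]
        exact ⟨fun h => ⟨h.1.2, h.2⟩, fun h => ⟨⟨fun hj0 => h.2 (hj0 ▸ hi₀), h.1⟩, h.2⟩⟩
      rw [hterm, hrest, sum_fTheta, e1, e2, Finset.card_erase_of_mem hi₀,
        Finset.card_erase_of_mem hiC, castA, castB]
      simp only [Finset.card_singleton, Nat.cast_one, one_mul, hT]
    · rintro x ⟨g, rfl⟩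
      have hub := payoff_le_aux A hfβ hfαβ hδ0 hδ1 hcδ g i
      have e1 : univ.erase i ∩ A = A := by
        ext j
        simp only [Finset.mem_inter, Finset.mem_erase, Finset.mem_univ, and_true, true_and]
        exact ⟨fun h => h.2, fun h => ⟨fun hji => hi (hji ▸ h), h⟩⟩
      have e2 : univ.erase i \ A = Aᶜ.erase i := by
        ext j
        simp only [Finset.mem_sdiff, Finset.mem_erase, Finset.mem_univ, and_true, true_and,
          Finset.mem_compl]
      rw [sum_fTheta, e1, e2, Finset.card_erase_of_mem hiC, castB] at hub
      have heq : δ * ((A.card : ℝ) * fα + ((Aᶜ.card : ℝ) - 1) * fβ) + (1 - δ) * fα - c = T := by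
        rw [hT]; ring
      rw [heq] at hub
      exact hub.trans (max_le (by rw [hT]; linarith) le_rfl)
end
end
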